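/- Let I ⊆ [1,r] be the set of indices i with n_i even, and suppose I ≠ ∅. Then an ideal of B is a minimal prime if and only if it has the form p = (b_{i,j} − (−1)^{ε_{i,j}} σ^{−j}((z−α_i)^{n_i/2}) : i ∈ I, j ∈ ℤ) for some choice of signs ε_{i,j} ∈ {0,1}. -/

import Mathlib

set_option maxHeartbeats 1000000
set_option synthInstance.maxHeartbeats 100000


/- The commutative ring `B = R[b_{i,j} : i in [1,r], j in Z]/(b_{i,j}^2 - sigma^{-j}((z-a_i)^{n_i}))`
with `R = k[z]`, `sigma(z) = z + 1` (so `sigma^{-j}((z-a_i)^{n_i}) = (z - (a_i + j))^{n_i}`). -/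

open Polynomial

/-- The element `sigma^{-j}((z - a_i)^{n_i}) = (z - (a_i + j))^{n_i}` of `R = k[z]`. -/
noncomputable def Bgen (k : Type) [Field k] {r : ℕ} (α : Fin r → k) (n : Fin r → ℕ)
    (i : Fin r) (j : ℤ) : k[X] :=
  (X - C (α i + (j : k))) ^ n i

/-- The ideal of relations `b_{i,j}^2 = sigma^{-j}((z - a_i)^{n_i})`. -/
noncomputable def Brel (k : Type) [Field k] (r : ℕ) (α : Fin r → k) (n : Fin r → ℕ) :
    Ideal (MvPolynomial (Fin r × ℤ) k[X]) :=
  Ideal.span {p | ∃ (i : Fin r) (j : ℤ),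
    p = MvPolynomial.X (i, j) ^ 2 - MvPolynomial.C (Bgen k α n i j)}

/-- The ring `B`. -/
noncomputable abbrev Bring (k : Type) [Field k] (r : ℕ) (α : Fin r → k) (n : Fin r → ℕ) :
    Type :=
  MvPolynomial (Fin r × ℤ) k[X] ⧸ Brel k r α n

section Kummer
variable {K Ω : Type*} [Field K] [Field Ω] [Algebra K Ω]
variable {ι : Type*} (f : ι → K) (σ : ι → Ω)

lemma adjoin_insert_rep (hσ : ∀ i, σ i ^ 2 = algebraMap K Ω (f i))
    (u : ι) (E : Set ι) {x : Ω} (hx : x ∈ Algebra.adjoin K (σ '' insert u E)) :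
    ∃ y ∈ Algebra.adjoin K (σ '' E), ∃ z ∈ Algebra.adjoin K (σ '' E), x = y + z * σ u := by
  induction hx using Algebra.adjoin_induction with
  | mem w hw =>
    obtain ⟨i, hi, rfl⟩ := hw
    rcases hi with rfl | hi
    · exact ⟨0, Subalgebra.zero_mem _, 1, Subalgebra.one_mem _, by ring⟩
    · exact ⟨σ i, Algebra.subset_adjoin ⟨i, hi, rfl⟩, 0, Subalgebra.zero_mem _, by ring⟩
  | algebraMap r =>
    exact ⟨algebraMap K Ω r, Subalgebra.algebraMap_mem _ r, 0, Subalgebra.zero_mem _, by ring⟩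
  | add x y hx hy ihx ihy =>
    obtain ⟨a, ha, b, hb, rfl⟩ := ihx
    obtain ⟨c, hc, d, hd, rfl⟩ := ihy
    exact ⟨a + c, Subalgebra.add_mem _ ha hc, b + d, Subalgebra.add_mem _ hb hd, by ring⟩
  | mul x y hx hy ihx ihy =>
    obtain ⟨a, ha, b, hb, rfl⟩ := ihx
    obtain ⟨c, hc, d, hd, rfl⟩ := ihy
    refine ⟨a * c + b * d * algebraMap K Ω (f u),
      Subalgebra.add_mem _ (Subalgebra.mul_mem _ ha hc)
        (Subalgebra.mul_mem _ (Subalgebra.mul_mem _ hb hd) (Subalgebra.algebraMap_mem _ _)),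
      a * d + b * c, Subalgebra.add_mem _ (Subalgebra.mul_mem _ ha hd)
        (Subalgebra.mul_mem _ hb hc), ?_⟩
    ring_nf
    rw [hσ u]
    ring

variable [CharZero K] [Algebra.IsAlgebraic K Ω]

omit [CharZero K] in
lemma inv_mem_adjoin {s : Set Ω} {w : Ω} (hw : w ∈ Algebra.adjoin K s) :
    w⁻¹ ∈ Algebra.adjoin K s :=
  Subalgebra.inv_mem_of_algebraic (A := Algebra.adjoin K s) (x := ⟨w, hw⟩)
    (Algebra.IsAlgebraic.isAlgebraic w)

omit [Algebra.IsAlgebraic K Ω] in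
omit σ in
include f in
lemma my_two_ne_zero : (2 : Ω) ≠ 0 := by
  intro h2
  exact two_ne_zero ((algebraMap K Ω).injective
    (by rw [map_ofNat, h2, map_zero] : algebraMap K Ω 2 = algebraMap K Ω 0))

lemma claimA
    (hσ : ∀ i, σ i ^ 2 = algebraMap K Ω (f i))
    (hf : ∀ S : Finset ι, S.Nonempty → ∀ x : K, x ^ 2 ≠ ∏ s ∈ S, f s)
    (E : Finset ι) :
    ∀ S : Finset ι, S.Nonempty → Disjoint S E →
      ∀ x ∈ Algebra.adjoin K (σ '' E), x ^ 2 ≠ algebraMap K Ω (∏ s ∈ S, f s) := by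
  classical
  induction E using Finset.induction_on with
  | empty =>
    intro S hS _ x hx hsq
    rw [Finset.coe_empty, Set.image_empty, Algebra.adjoin_empty, Algebra.mem_bot] at hx
    obtain ⟨y, rfl⟩ := hx
    rw [← map_pow] at hsq
    exact hf S hS y ((algebraMap K Ω).injective hsq)
  | @insert u E' hu ih =>
    intro S hS hdisj x hx hsq
    rw [Finset.coe_insert] at hx
    obtain ⟨y, hy, z, hz, rfl⟩ := adjoin_insert_rep f σ hσ u (↑E') hx
    have hdS : Disjoint S E' := (Finset.disjoint_insert_right.mp hdisj).2
    have huS : u ∉ S := fun h =>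
      (Finset.disjoint_left.mp hdisj h) (Finset.mem_insert_self u E')
    have hσuA : σ u ∉ Algebra.adjoin K (σ '' ↑E') := by
      intro hmem
      exact ih {u} (Finset.singleton_nonempty u) (Finset.disjoint_singleton_left.mpr hu)
        (σ u) hmem (by rw [Finset.prod_singleton]; exact hσ u)
    have hexp : (y + z * σ u) ^ 2
        = y ^ 2 + z ^ 2 * algebraMap K Ω (f u) + (2 * (y * z)) * σ u := by
      linear_combination (z ^ 2) * hσ u
    have hyz : y * z = 0 := by
      by_contra hyz
      have htwo : (2 : Ω) ≠ 0 := my_two_ne_zero (K := K) f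
      have h2yz : (2 * (y * z)) ≠ 0 := mul_ne_zero htwo hyz
      have hrep : σ u = (algebraMap K Ω (∏ s ∈ S, f s) - y ^ 2 - z ^ 2 * algebraMap K Ω (f u))
          * (2 * (y * z))⁻¹ := by
        rw [← hsq, hexp, eq_mul_inv_iff_mul_eq₀ h2yz]; ring
      apply hσuA
      rw [hrep]
      refine Subalgebra.mul_mem _ ?_ (inv_mem_adjoin ?_)
      · exact Subalgebra.sub_mem _ (Subalgebra.sub_mem _ (Subalgebra.algebraMap_mem _ _)
          (Subalgebra.pow_mem _ hy 2))
          (Subalgebra.mul_mem _ (Subalgebra.pow_mem _ hz 2) (Subalgebra.algebraMap_mem _ _))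
      · refine Subalgebra.mul_mem _ ?_ (Subalgebra.mul_mem _ hy hz)
        rw [← map_ofNat (algebraMap K Ω) 2]
        exact Subalgebra.algebraMap_mem _ _
    rcases mul_eq_zero.mp hyz with h0 | h0
    · subst h0
      have hz2 : z ^ 2 * algebraMap K Ω (f u) = algebraMap K Ω (∏ s ∈ S, f s) := by
        rw [← hsq]; linear_combination (-(z ^ 2)) * hσ u
      apply ih (insert u S) (Finset.insert_nonempty u S)
        (Finset.disjoint_insert_left.mpr ⟨hu, hdS⟩)
        (z * algebraMap K Ω (f u))
        (Subalgebra.mul_mem _ hz (Subalgebra.algebraMap_mem _ _))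
      rw [Finset.prod_insert huS, map_mul]
      linear_combination (algebraMap K Ω (f u)) * hz2
    · subst h0
      apply ih S hS hdS y hy
      rw [← hsq]
      ring
lemma claimB
    (hσ : ∀ i, σ i ^ 2 = algebraMap K Ω (f i))
    (hf : ∀ S : Finset ι, S.Nonempty → ∀ x : K, x ^ 2 ≠ ∏ s ∈ S, f s)
    (E : Finset ι) :
    ∀ a : Finset ι → K,
      (∑ S ∈ E.powerset, algebraMap K Ω (a S) * ∏ s ∈ S, σ s) = 0 →
      ∀ S ∈ E.powerset, a S = 0 := by
  classical
  induction E using Finset.induction_on with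
  | empty =>
    intro a hsum S hS
    rw [Finset.powerset_empty, Finset.sum_singleton, Finset.prod_empty, mul_one] at hsum
    rw [Finset.powerset_empty, Finset.mem_singleton] at hS
    subst hS
    exact (_root_.map_eq_zero _).mp hsum
  | @insert u E' hu ih =>
    intro a hsum S hS
    have hdisj' : Disjoint E'.powerset (Finset.image (insert u) E'.powerset) := by
      rw [Finset.disjoint_left]
      intro T hT hT'
      obtain ⟨T', hT', rfl⟩ := Finset.mem_image.mp hT'
      exact hu (Finset.mem_powerset.mp hT (Finset.mem_insert_self u T'))
    have himage : ∀ S1 ∈ E'.powerset, ∀ S2 ∈ E'.powerset,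
        insert u S1 = insert u S2 → S1 = S2 := by
      intro S1 h1 S2 h2 he
      have h1' : u ∉ S1 := fun h => hu (Finset.mem_powerset.mp h1 h)
      have h2' : u ∉ S2 := fun h => hu (Finset.mem_powerset.mp h2 h)
      rw [← Finset.erase_insert h1', ← Finset.erase_insert h2', he]
    rw [Finset.powerset_insert, Finset.sum_union hdisj', Finset.sum_image himage] at hsum
    set A' := Algebra.adjoin K (σ '' ↑E') with hA'
    set P := ∑ S ∈ E'.powerset, algebraMap K Ω (a S) * ∏ s ∈ S, σ s with hP
    set Q := ∑ S ∈ E'.powerset, algebraMap K Ω (a (insert u S)) * ∏ s ∈ S, σ s with hQ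
    have hsum2 : P + σ u * Q = 0 := by
      rw [← hsum, hP, hQ, Finset.mul_sum]
      congr 1
      apply Finset.sum_congr rfl
      intro T hT
      have huT : u ∉ T := fun h => hu (Finset.mem_powerset.mp hT h)
      rw [Finset.prod_insert huT]
      ring
    have hmono : ∀ T ∈ E'.powerset, (∏ s ∈ T, σ s) ∈ A' := by
      intro T hT
      exact Subalgebra.prod_mem _ fun s hs =>
        Algebra.subset_adjoin ⟨s, Finset.mem_powerset.mp hT hs, rfl⟩
    have hPm : P ∈ A' := Subalgebra.sum_mem _ fun T hT =>
      Subalgebra.mul_mem _ (Subalgebra.algebraMap_mem _ _) (hmono T hT)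
    have hQm : Q ∈ A' := Subalgebra.sum_mem _ fun T hT =>
      Subalgebra.mul_mem _ (Subalgebra.algebraMap_mem _ _) (hmono T hT)
    have hQ0 : Q = 0 := by
      by_contra hQ0
      have hσmem : σ u ∈ A' := by
        have : σ u = (-P) * Q⁻¹ := by
          field_simp
          linear_combination hsum2
        rw [this]
        exact Subalgebra.mul_mem _ (Subalgebra.neg_mem _ hPm) (inv_mem_adjoin hQm)
      exact claimA f σ hσ hf E' {u} (Finset.singleton_nonempty u)
        (Finset.disjoint_singleton_left.mpr hu) (σ u) hσmem
        (by rw [Finset.prod_singleton]; exact hσ u)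
    have hP0 : P = 0 := by
      rw [hQ0, mul_zero, add_zero] at hsum2; exact hsum2
    have h1 := ih a hP0
    have h2 := ih (fun S => a (insert u S)) hQ0
    have hS' : S ⊆ insert u E' := Finset.mem_powerset.mp hS
    by_cases hus : u ∈ S
    · have hSe : S.erase u ⊆ E' := by
        intro x hx
        rcases Finset.mem_insert.mp (hS' (Finset.mem_of_mem_erase hx)) with h | h
        · exact absurd h (Finset.ne_of_mem_erase hx)
        · exact h
      rw [← Finset.insert_erase hus]
      exact h2 _ (Finset.mem_powerset.mpr hSe)
    · have hSe : S ⊆ E' := by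
        intro x hx
        rcases Finset.mem_insert.mp (hS' hx) with h | h
        · exact absurd (h ▸ hx) hus
        · exact h
      exact h1 S (Finset.mem_powerset.mpr hSe)
end Kummer

open Polynomial



section Setup
variable {k : Type} [Field k] [CharZero k] {r : ℕ} (α : Fin r → k) (n : Fin r → ℕ)

lemma root_inj (hα : ∀ i j : Fin r, ∀ t : ℤ, α i = α j + (t : k) → i = j)
    {s t : Fin r × ℤ} (h : α s.1 + (s.2 : k) = α t.1 + (t.2 : k)) : s = t := by
  have h1 : α s.1 = α t.1 + ((t.2 - s.2 : ℤ) : k) := by push_cast; linear_combination h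
  have h2 : s.1 = t.1 := hα s.1 t.1 (t.2 - s.2) h1
  have h3 : (s.2 : k) = (t.2 : k) := by rw [h2] at h; linear_combination h
  exact Prod.ext h2 (by exact_mod_cast h3)

lemma bgen_ne_zero (i : Fin r) (j : ℤ) : Bgen k α n i j ≠ 0 :=
  pow_ne_zero _ (X_sub_C_ne_zero _)

/-- products of the odd-multiplicity generators are not squares in `k(z)` -/
lemma prod_not_square (hα : ∀ i j : Fin r, ∀ t : ℤ, α i = α j + (t : k) → i = j)
    (S : Finset {s : Fin r × ℤ // ¬ Even (n s.1)}) (hS : S.Nonempty)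
    (x : FractionRing k[X]) :
    x ^ 2 ≠ ∏ s ∈ S, algebraMap k[X] (FractionRing k[X]) (Bgen k α n s.1.1 s.1.2) := by
  intro hx
  classical
  obtain ⟨s₀, hs₀⟩ := hS
  set g : k[X] := ∏ s ∈ S, Bgen k α n s.1.1 s.1.2 with hg
  have hg0 : g ≠ 0 := Finset.prod_ne_zero_iff.mpr fun s _ => bgen_ne_zero α n _ _
  rw [← map_prod, ← hg] at hx
  obtain ⟨p, q, hq, hpq⟩ := IsFractionRing.div_surjective (A := k[X]) x
  have hq0 : q ≠ 0 := nonZeroDivisors.ne_zero hq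
  have hq0' : algebraMap k[X] (FractionRing k[X]) q ≠ 0 := by
    rw [Ne, IsFractionRing.to_map_eq_zero_iff]; exact hq0
  rw [← hpq] at hx
  rw [div_pow, div_eq_iff (pow_ne_zero 2 hq0')] at hx
  have key : p ^ 2 = g * q ^ 2 := by
    apply IsFractionRing.injective k[X] (FractionRing k[X])
    rw [map_pow, map_mul, map_pow]
    linear_combination hx
  have hp0 : p ≠ 0 := by
    intro h
    rw [h] at key
    exact (mul_ne_zero hg0 (pow_ne_zero 2 hq0)) (by linear_combination -key)
  set cc : k := α s₀.1.1 + (s₀.1.2 : k) with hcc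
  set rest : k[X] := ∏ s ∈ S.erase s₀, Bgen k α n s.1.1 s.1.2 with hrest
  have hrest0 : rest ≠ 0 := Finset.prod_ne_zero_iff.mpr fun s _ => bgen_ne_zero α n _ _
  have hgsplit : g = Bgen k α n s₀.1.1 s₀.1.2 * rest := by
    rw [hg, hrest]; exact (Finset.mul_prod_erase S _ hs₀).symm
  have hrestroot : rootMultiplicity cc rest = 0 := by
    apply rootMultiplicity_eq_zero
    rw [IsRoot, hrest, eval_prod]
    apply Finset.prod_ne_zero_iff.mpr
    intro s hs
    rw [Bgen, eval_pow, eval_sub, eval_X, eval_C]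
    apply pow_ne_zero
    intro h0
    have : cc = α s.1.1 + (s.1.2 : k) := by linear_combination h0
    exact (Finset.ne_of_mem_erase hs) (Subtype.ext (root_inj α hα this.symm))
  have mulrm : ∀ a b : k[X], a ≠ 0 → b ≠ 0 →
      rootMultiplicity cc (a * b) = rootMultiplicity cc a + rootMultiplicity cc b :=
    fun a b ha hb => rootMultiplicity_mul (mul_ne_zero ha hb)
  have e1 : rootMultiplicity cc (p ^ 2) = 2 * rootMultiplicity cc p := by
    rw [sq, mulrm p p hp0 hp0]; ring
  have e2 : rootMultiplicity cc (g * q ^ 2)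
      = n s₀.1.1 + (2 * rootMultiplicity cc q) := by
    rw [mulrm g (q ^ 2) hg0 (pow_ne_zero 2 hq0), sq, mulrm q q hq0 hq0,
      hgsplit, mulrm _ rest (bgen_ne_zero α n _ _) hrest0, hrestroot, Bgen, hcc,
      rootMultiplicity_X_sub_C_pow]
    ring
  rw [key, e2] at e1
  have : Even (n s₀.1.1) := ⟨rootMultiplicity cc p - rootMultiplicity cc q, by omega⟩
  exact s₀.2 this
end Setup


section Main
variable (k : Type) [Field k] [CharZero k] {r : ℕ} (α : Fin r → k) (n : Fin r → ℕ)

local notation "Amv" => MvPolynomial (Fin r × ℤ) k[X]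
local notation "K0" => FractionRing k[X]
local notation "Om" => AlgebraicClosure (FractionRing k[X])

noncomputable def hpol (s : Fin r × ℤ) : k[X] := (X - C (α s.1 + (s.2 : k))) ^ (n s.1 / 2)

noncomputable def epol (ε : Fin r × ℤ → Bool) (s : Fin r × ℤ) : k[X] :=
  (if ε s then -1 else 1) * hpol k α n s

noncomputable def gg (ε : Fin r × ℤ → Bool) (s : Fin r × ℤ) : Amv :=
  MvPolynomial.X s - MvPolynomial.C (epol k α n ε s)

def Gset (ε : Fin r × ℤ → Bool) : Set Amv :=
  {q | ∃ s : Fin r × ℤ, Even (n s.1) ∧ q = gg k α n ε s}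

noncomputable def Jid (ε : Fin r × ℤ → Bool) : Ideal Amv :=
  Brel k r α n ⊔ Ideal.span (Gset k α n ε)

noncomputable def sqf (s : Fin r × ℤ) : Om :=
  Classical.choose (IsAlgClosed.exists_pow_nat_eq
    (algebraMap k[X] Om (Bgen k α n s.1 s.2)) two_pos)

lemma sqf_spec (s : Fin r × ℤ) :
    sqf k α n s ^ 2 = algebraMap k[X] Om (Bgen k α n s.1 s.2) :=
  Classical.choose_spec (IsAlgClosed.exists_pow_nat_eq
    (algebraMap k[X] Om (Bgen k α n s.1 s.2)) two_pos)

noncomputable def vmap (ε : Fin r × ℤ → Bool) (s : Fin r × ℤ) : Om :=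
  if Even (n s.1) then algebraMap k[X] Om (epol k α n ε s) else sqf k α n s

noncomputable def phi (ε : Fin r × ℤ → Bool) : Amv →+* Om :=
  MvPolynomial.eval₂Hom (algebraMap k[X] Om) (vmap k α n ε)

lemma algebraMap_Om_injective : Function.Injective (algebraMap k[X] Om) := by
  rw [IsScalarTower.algebraMap_eq k[X] (FractionRing k[X])]
  exact (algebraMap (FractionRing k[X]) _).injective.comp (IsFractionRing.injective _ _)

lemma hpol_sq {s : Fin r × ℤ} (h : Even (n s.1)) :
    hpol k α n s ^ 2 = Bgen k α n s.1 s.2 := by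
  rw [hpol, Bgen, ← pow_mul, Nat.div_mul_cancel h.two_dvd]

lemma epol_sq (ε : Fin r × ℤ → Bool) {s : Fin r × ℤ} (h : Even (n s.1)) :
    epol k α n ε s ^ 2 = Bgen k α n s.1 s.2 := by
  rw [epol, mul_pow, ← hpol_sq k α n h]
  rcases Bool.eq_false_or_eq_true (ε s) with h' | h' <;> rw [h'] <;> simp <;> ring

lemma Jid_le_ker (ε : Fin r × ℤ → Bool) : Jid k α n ε ≤ RingHom.ker (phi k α n ε) := by
  rw [Jid, sup_le_iff]
  constructor
  · rw [Brel, Ideal.span_le]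
    rintro _ ⟨i, j, rfl⟩
    rw [SetLike.mem_coe, RingHom.mem_ker, map_sub, map_pow, phi,
      MvPolynomial.eval₂Hom_X', MvPolynomial.eval₂Hom_C, vmap]
    by_cases h : Even (n i)
    · rw [if_pos h, ← map_pow, epol_sq k α n ε h]
      ring
    · rw [if_neg h, sqf_spec]
      ring
  · rw [Ideal.span_le]
    rintro _ ⟨s, hs, rfl⟩
    rw [SetLike.mem_coe, RingHom.mem_ker, gg, map_sub, phi,
      MvPolynomial.eval₂Hom_X', MvPolynomial.eval₂Hom_C, vmap, if_pos hs]
    ring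

noncomputable def mono (S : Finset {s : Fin r × ℤ // ¬ Even (n s.1)}) : Amv :=
  ∏ t ∈ S, MvPolynomial.X (t : Fin r × ℤ)

noncomputable def NF (ε : Fin r × ℤ → Bool) : Submodule k[X] Amv :=
  (Jid k α n ε).restrictScalars k[X] ⊔ Submodule.span k[X] (Set.range (mono k n))

lemma mulX_mem (ε : Fin r × ℤ → Bool) (s : Fin r × ℤ) :
    ∀ x ∈ NF k α n ε, x * MvPolynomial.X s ∈ NF k α n ε := by
  classical
  intro x hx
  rw [NF, Submodule.mem_sup] at hx
  obtain ⟨j, hj, m, hm, rfl⟩ := hx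
  rw [add_mul]
  apply Submodule.add_mem
  · apply Submodule.mem_sup_left
    exact Ideal.mul_mem_right _ _ hj
  · induction hm using Submodule.span_induction with
    | zero => rw [zero_mul]; exact Submodule.zero_mem _
    | add y z hy hz ihy ihz => rw [add_mul]; exact Submodule.add_mem _ ihy ihz
    | smul a y hy ihy => rw [smul_mul_assoc]; exact Submodule.smul_mem _ _ ihy
    | mem y hy =>
      obtain ⟨S, rfl⟩ := hy
      by_cases hs : Even (n s.1)
      · have hdecomp : mono k n S * MvPolynomial.X s
            = mono k n S * gg k α n ε s + epol k α n ε s • mono k n S := by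
          rw [gg, MvPolynomial.smul_eq_C_mul]; ring
        rw [hdecomp]
        apply Submodule.add_mem
        · apply Submodule.mem_sup_left
          exact Ideal.mul_mem_left _ _
            (Ideal.mem_sup_right (Ideal.subset_span ⟨s, hs, rfl⟩))
        · exact Submodule.mem_sup_right (Submodule.smul_mem _ _
            (Submodule.subset_span ⟨S, rfl⟩))
      · set t : {s : Fin r × ℤ // ¬ Even (n s.1)} := ⟨s, hs⟩ with ht
        by_cases hts : t ∈ S
        · have h1 : mono k n S = MvPolynomial.X s * mono k n (S.erase t) := by
            rw [mono, mono]
            exact (Finset.mul_prod_erase S _ hts).symm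
          have hdecomp : mono k n S * MvPolynomial.X s
              = mono k n (S.erase t)
                  * (MvPolynomial.X s ^ 2 - MvPolynomial.C (Bgen k α n s.1 s.2))
                + Bgen k α n s.1 s.2 • mono k n (S.erase t) := by
            rw [h1, MvPolynomial.smul_eq_C_mul]; ring
          rw [hdecomp]
          apply Submodule.add_mem
          · apply Submodule.mem_sup_left
            apply Ideal.mul_mem_left
            apply Ideal.mem_sup_left
            exact Ideal.subset_span ⟨s.1, s.2, by rw [Prod.mk.eta]⟩
          · exact Submodule.mem_sup_right (Submodule.smul_mem _ _
              (Submodule.subset_span ⟨S.erase t, rfl⟩))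
        · have h1 : mono k n S * MvPolynomial.X s = mono k n (insert t S) := by
            rw [mono, mono, Finset.prod_insert hts]; ring
          rw [h1]
          exact Submodule.mem_sup_right (Submodule.subset_span ⟨insert t S, rfl⟩)

lemma mem_NF (ε : Fin r × ℤ → Bool) : ∀ x : Amv, x ∈ NF k α n ε := by
  intro x
  refine MvPolynomial.induction_on x ?_ ?_ ?_
  · intro a
    apply Submodule.mem_sup_right
    have h1 : MvPolynomial.C a = a • mono k n ∅ := by
      rw [mono, Finset.prod_empty, MvPolynomial.smul_eq_C_mul, mul_one]
    rw [h1]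
    exact Submodule.smul_mem _ _ (Submodule.subset_span ⟨∅, rfl⟩)
  · intro p q hp hq
    exact Submodule.add_mem _ hp hq
  · intro p s hp
    exact mulX_mem k α n ε s p hp

lemma ker_phi (hα : ∀ i j : Fin r, ∀ t : ℤ, α i = α j + (t : k) → i = j)
    (ε : Fin r × ℤ → Bool) : RingHom.ker (phi k α n ε) = Jid k α n ε := by
  classical
  refine le_antisymm ?_ (Jid_le_ker k α n ε)
  intro x hx
  have hxNF := mem_NF k α n ε x
  rw [NF, Submodule.mem_sup] at hxNF
  obtain ⟨j, hj, m, hm, hsum⟩ := hxNF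
  rw [Finsupp.mem_span_range_iff_exists_finsupp] at hm
  obtain ⟨cf, hcf⟩ := hm
  have hφj : phi k α n ε j = 0 := Jid_le_ker k α n ε hj
  have hφm : phi k α n ε m = 0 := by
    have hx0 : phi k α n ε x = 0 := hx
    rw [← hsum, map_add, hφj, zero_add] at hx0
    exact hx0
  have hφmono : ∀ S : Finset {s : Fin r × ℤ // ¬ Even (n s.1)},
      phi k α n ε (mono k n S) = ∏ t ∈ S, sqf k α n ↑t := by
    intro S
    rw [mono, map_prod]
    refine Finset.prod_congr rfl fun t ht => ?_
    rw [phi, MvPolynomial.eval₂Hom_X', vmap, if_neg t.2]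
  have hφm' : (∑ S ∈ cf.support,
      algebraMap (FractionRing k[X]) Om (algebraMap k[X] (FractionRing k[X]) (cf S))
        * ∏ t ∈ S, sqf k α n ↑t) = 0 := by
    rw [← hφm, ← hcf, Finsupp.sum, map_sum]
    refine Finset.sum_congr rfl fun S hS => ?_
    rw [MvPolynomial.smul_eq_C_mul, map_mul, hφmono, phi, MvPolynomial.eval₂Hom_C,
      ← IsScalarTower.algebraMap_apply]
  set E : Finset {s : Fin r × ℤ // ¬ Even (n s.1)} := cf.support.sup id with hE
  have hsupp : ∀ S ∈ cf.support, S ∈ E.powerset := by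
    intro S hS
    exact Finset.mem_powerset.mpr (Finset.le_sup (f := id) hS)
  have hEsum : (∑ S ∈ E.powerset,
      algebraMap (FractionRing k[X]) Om (algebraMap k[X] (FractionRing k[X]) (cf S))
        * ∏ t ∈ S, sqf k α n ↑t) = 0 := by
    rw [← hφm', Finset.sum_subset (fun S hS => hsupp S hS)]
    intro S _ hS
    rw [Finsupp.notMem_support_iff.mp hS, map_zero, map_zero, zero_mul]
  have hall := claimB (K := FractionRing k[X]) (Ω := AlgebraicClosure (FractionRing k[X]))
    (fun t : {s : Fin r × ℤ // ¬ Even (n s.1)} =>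
      algebraMap k[X] (FractionRing k[X]) (Bgen k α n t.1.1 t.1.2))
    (fun t => sqf k α n ↑t)
    (fun t => by rw [sqf_spec, IsScalarTower.algebraMap_apply k[X] (FractionRing k[X])])
    (fun S hS x => by rw [← Finset.prod_congr rfl (fun t _ => rfl)]; exact prod_not_square α n hα S hS x)
    E (fun S => algebraMap k[X] (FractionRing k[X]) (cf S)) hEsum
  have hcf0 : ∀ S, cf S = 0 := by
    intro S
    by_cases hS : S ∈ cf.support
    · have := hall S (hsupp S hS)
      rwa [IsFractionRing.to_map_eq_zero_iff] at this
    · exact Finsupp.notMem_support_iff.mp hS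
  have hm0 : m = 0 := by
    rw [← hcf, Finsupp.sum]
    exact Finset.sum_eq_zero fun S _ => by rw [hcf0 S, zero_smul]
  rw [← hsum, hm0, add_zero]
  exact hj


variable (r)

local notation "π" => Ideal.Quotient.mk (Brel k r α n)

lemma hpol_ne_zero (s : Fin r × ℤ) : hpol k α n s ≠ 0 :=
  pow_ne_zero _ (X_sub_C_ne_zero _)

lemma mk_gg (ε : Fin r × ℤ → Bool) (s : Fin r × ℤ) :
    π (gg k α n ε s) = π (MvPolynomial.X s)
      - (if ε s then -1 else 1) * π (MvPolynomial.C (hpol k α n s)) := by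
  rcases Bool.eq_false_or_eq_true (ε s) with h | h <;> rw [gg, epol, h]
  · rw [if_pos rfl, if_pos rfl, neg_one_mul, map_sub, map_neg, map_neg]
    ring
  · rw [if_neg Bool.false_ne_true, if_neg Bool.false_ne_true, one_mul, map_sub]
    ring


/-- the generating set appearing in the theorem statement -/
def Sset (ε : Fin r × ℤ → Bool) : Set (Bring k r α n) :=
  {b : Bring k r α n | ∃ (i : Fin r) (j : ℤ), Even (n i) ∧
    b = π (MvPolynomial.X (i, j)) -
      (if ε (i, j) then -1 else 1) * π (MvPolynomial.C ((X - C (α i + (j : k))) ^ (n i / 2)))}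

lemma Sset_eq_image (ε : Fin r × ℤ → Bool) :
    Sset k r α n ε = π '' (Gset k α n ε) := by
  ext b
  constructor
  · rintro ⟨i, j, hev, rfl⟩
    exact ⟨gg k α n ε (i, j), ⟨(i, j), hev, rfl⟩, mk_gg k r α n ε (i, j)⟩
  · rintro ⟨g, ⟨s, hs, rfl⟩, rfl⟩
    refine ⟨s.1, s.2, hs, ?_⟩
    rw [mk_gg k r α n ε, Prod.mk.eta]
    rfl

lemma span_Sset (ε : Fin r × ℤ → Bool) :
    Ideal.span (Sset k r α n ε) = Ideal.map π (Jid k α n ε) := by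
  rw [Jid, Ideal.map_sup, Ideal.map_quotient_self, bot_sup_eq, Ideal.map_span,
    Sset_eq_image]

lemma Jid_isPrime (hα : ∀ i j : Fin r, ∀ t : ℤ, α i = α j + (t : k) → i = j)
    (ε : Fin r × ℤ → Bool) : (Jid k α n ε).IsPrime := by
  rw [← ker_phi k α n hα ε]
  exact RingHom.ker_isPrime _

lemma brel_le_Jid (ε : Fin r × ℤ → Bool) : Brel k r α n ≤ Jid k α n ε := le_sup_left

lemma pe_isPrime (hα : ∀ i j : Fin r, ∀ t : ℤ, α i = α j + (t : k) → i = j)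
    (ε : Fin r × ℤ → Bool) : (Ideal.map π (Jid k α n ε)).IsPrime := by
  have := Jid_isPrime k r α n hα ε
  exact Ideal.map_isPrime_of_surjective Ideal.Quotient.mk_surjective
    (by rw [Ideal.mk_ker]; exact brel_le_Jid k r α n ε)

lemma comap_pe (ε : Fin r × ℤ → Bool) :
    Ideal.comap π (Ideal.map π (Jid k α n ε)) = Jid k α n ε := by
  rw [Ideal.comap_map_of_surjective π Ideal.Quotient.mk_surjective]
  have h1 : Ideal.comap π ⊥ = Brel k r α n := by
    rw [← RingHom.ker_eq_comap_bot, Ideal.mk_ker]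
  rw [h1]
  exact sup_eq_left.mpr (brel_le_Jid k r α n ε)

lemma mem_pe_iff (ε : Fin r × ℤ → Bool) (a : MvPolynomial (Fin r × ℤ) k[X]) :
    π a ∈ Ideal.map π (Jid k α n ε) ↔ a ∈ Jid k α n ε := by
  constructor
  · intro h
    rw [← comap_pe k r α n ε]
    exact h
  · intro h
    exact Ideal.mem_map_of_mem π h

lemma rel_zero (s : Fin r × ℤ) :
    π (MvPolynomial.X s ^ 2 - MvPolynomial.C (Bgen k α n s.1 s.2)) = 0 := by
  rw [Ideal.Quotient.eq_zero_iff_mem, Brel]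
  exact Ideal.subset_span ⟨s.1, s.2, by rw [Prod.mk.eta]⟩

noncomputable def epsOf (q : Ideal (Bring k r α n)) : Fin r × ℤ → Bool :=
  fun s => @decide
    (Ideal.Quotient.mk (Brel k r α n) (MvPolynomial.X s)
      + Ideal.Quotient.mk (Brel k r α n) (MvPolynomial.C (hpol k α n s)) ∈ q)
    (Classical.propDecidable _)

lemma exists_pe_le (q : Ideal (Bring k r α n)) (hq : q.IsPrime) :
    ∃ ε : Fin r × ℤ → Bool, Ideal.map π (Jid k α n ε) ≤ q := by
  classical
  refine ⟨epsOf k r α n q, ?_⟩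
  rw [Ideal.map_le_iff_le_comap, Jid, sup_le_iff]
  constructor
  · intro a ha
    have h0 : π a = 0 := by rw [Ideal.Quotient.eq_zero_iff_mem]; exact ha
    rw [Ideal.mem_comap, h0]
    exact q.zero_mem
  · rw [Ideal.span_le]
    rintro _ ⟨s, hs, rfl⟩
    rw [SetLike.mem_coe, Ideal.mem_comap, mk_gg k r α n]
    by_cases hmem : π (MvPolynomial.X s) + π (MvPolynomial.C (hpol k α n s)) ∈ q
    · have heps : epsOf k r α n q s = true := decide_eq_true hmem
      rw [heps, if_pos rfl]
      have heq : π (MvPolynomial.X s) - (-1) * π (MvPolynomial.C (hpol k α n s))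
          = π (MvPolynomial.X s) + π (MvPolynomial.C (hpol k α n s)) := by ring
      rw [heq]
      exact hmem
    · have heps : epsOf k r α n q s = false := by
        rw [epsOf, decide_eq_false_iff_not]
        exact hmem
      rw [heps, if_neg Bool.false_ne_true]
      have hpoly : (MvPolynomial.X s - MvPolynomial.C (hpol k α n s))
          * (MvPolynomial.X s + MvPolynomial.C (hpol k α n s))
          = MvPolynomial.X s ^ 2 - MvPolynomial.C (Bgen k α n s.1 s.2) := by
        rw [← hpol_sq k α n hs, map_pow]
        ring
      have heq1 : π (MvPolynomial.X s) - 1 * π (MvPolynomial.C (hpol k α n s))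
          = π (MvPolynomial.X s - MvPolynomial.C (hpol k α n s)) := by
        rw [map_sub]; ring
      have hprod : π (MvPolynomial.X s - MvPolynomial.C (hpol k α n s))
          * (π (MvPolynomial.X s) + π (MvPolynomial.C (hpol k α n s))) = 0 := by
        rw [← map_add, ← map_mul, hpoly, rel_zero]
      rw [heq1]
      rcases hq.mem_or_mem (by rw [hprod]; exact q.zero_mem) with h | h
      · exact h
      · exact absurd h hmem

lemma eps_agree (hα : ∀ i j : Fin r, ∀ t : ℤ, α i = α j + (t : k) → i = j)
    {ε ε' : Fin r × ℤ → Bool}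
    (hle : Ideal.map π (Jid k α n ε') ≤ Ideal.map π (Jid k α n ε))
    {s : Fin r × ℤ} (hs : Even (n s.1)) : ε' s = ε s := by
  by_contra hne
  have h1 : π (gg k α n ε' s) ∈ Ideal.map π (Jid k α n ε) :=
    hle (Ideal.mem_map_of_mem π (Ideal.mem_sup_right (Ideal.subset_span ⟨s, hs, rfl⟩)))
  have h2 : π (gg k α n ε s) ∈ Ideal.map π (Jid k α n ε) :=
    Ideal.mem_map_of_mem π (Ideal.mem_sup_right (Ideal.subset_span ⟨s, hs, rfl⟩))
  have h3 : π (gg k α n ε s - gg k α n ε' s) ∈ Ideal.map π (Jid k α n ε) := by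
    rw [map_sub]
    exact Ideal.sub_mem _ h2 h1
  have h4 : gg k α n ε s - gg k α n ε' s ∈ Jid k α n ε := by
    rw [← mem_pe_iff]
    exact h3
  rw [← ker_phi k α n hα ε, RingHom.mem_ker] at h4
  have h5 : gg k α n ε s - gg k α n ε' s
      = MvPolynomial.C (epol k α n ε' s - epol k α n ε s) := by
    rw [gg, gg, map_sub]
    ring
  rw [h5, phi, MvPolynomial.eval₂Hom_C] at h4
  have h6 : epol k α n ε' s - epol k α n ε s = 0 := algebraMap_Om_injective k
    (by rw [h4, map_zero])
  rw [epol, epol] at h6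
  have hp0 : hpol k α n s ≠ 0 := hpol_ne_zero k r α n s
  have h8 : (2 : k[X]) ≠ 0 := two_ne_zero
  rcases Bool.eq_false_or_eq_true (ε s) with h | h <;>
    rcases Bool.eq_false_or_eq_true (ε' s) with h' | h'
  · rw [h, h'] at hne; exact hne rfl
  · rw [h, h', if_pos rfl, if_neg Bool.false_ne_true] at h6
    have h7 : (2 : k[X]) * hpol k α n s = 0 := by linear_combination h6
    exact hp0 ((mul_eq_zero.mp h7).resolve_left h8)
  · rw [h, h', if_pos rfl, if_neg Bool.false_ne_true] at h6
    have h7 : (2 : k[X]) * hpol k α n s = 0 := by linear_combination -h6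
    exact hp0 ((mul_eq_zero.mp h7).resolve_left h8)
  · rw [h, h'] at hne; exact hne rfl

lemma Sset_congr {ε ε' : Fin r × ℤ → Bool}
    (h : ∀ s : Fin r × ℤ, Even (n s.1) → ε' s = ε s) :
    Sset k r α n ε' = Sset k r α n ε := by
  ext b
  constructor <;> rintro ⟨i, j, hev, rfl⟩ <;> exact ⟨i, j, hev, by rw [h (i, j) hev]⟩

end Main



/-- If some multiplicity `n_i` is even, then an ideal of `B` is a
minimal prime if and only if it is of the form
`p = (b_{i,j} − (−1)^{ε_{i,j}} σ^{−j}((z−α_i)^{n_i/2}) : n_i even, j ∈ ℤ)` for some choice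
of signs `ε`. -/
theorem Bring_minimalPrimes
    (k : Type) [Field k] [CharZero k] [IsAlgClosed k] (r : ℕ) (α : Fin r → k) (n : Fin r → ℕ)
    (hn : ∀ i, 0 < n i)
    (hα : ∀ i j : Fin r, ∀ t : ℤ, α i = α j + (t : k) → i = j)
    (hne : ∃ i, Even (n i)) :
    ∀ p : Ideal (Bring k r α n),
      p ∈ minimalPrimes (Bring k r α n) ↔
        ∃ ε : Fin r × ℤ → Bool,
          p = Ideal.span {b : Bring k r α n | ∃ (i : Fin r) (j : ℤ), Even (n i) ∧
            b = Ideal.Quotient.mk (Brel k r α n) (MvPolynomial.X (i, j)) -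
              (if ε (i, j) then -1 else 1) *
                Ideal.Quotient.mk (Brel k r α n)
                  (MvPolynomial.C ((X - C (α i + (j : k))) ^ (n i / 2)))} := by
  intro p
  have hSset : ∀ ε : Fin r × ℤ → Bool,
      ({b : Bring k r α n | ∃ (i : Fin r) (j : ℤ), Even (n i) ∧
        b = Ideal.Quotient.mk (Brel k r α n) (MvPolynomial.X (i, j)) -
          (if ε (i, j) then -1 else 1) *
            Ideal.Quotient.mk (Brel k r α n)
              (MvPolynomial.C ((X - C (α i + (j : k))) ^ (n i / 2)))}) = Sset k r α n ε :=
    fun ε => rfl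
  constructor
  · rintro ⟨⟨hp, -⟩, hmin⟩
    obtain ⟨ε, hle⟩ := exists_pe_le k r α n p hp
    refine ⟨ε, ?_⟩
    rw [hSset, span_Sset]
    exact le_antisymm (hmin ⟨pe_isPrime k r α n hα ε, bot_le⟩ hle) hle
  · rintro ⟨ε, rfl⟩
    rw [hSset, span_Sset]
    refine ⟨⟨pe_isPrime k r α n hα ε, bot_le⟩, ?_⟩
    rintro q ⟨hq, -⟩ hqle
    obtain ⟨ε', hle'⟩ := exists_pe_le k r α n q hq
    have hagree : ∀ s : Fin r × ℤ, Even (n s.1) → ε' s = ε s :=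
      fun s hs => eps_agree k r α n hα (le_trans hle' hqle) hs
    have hmapeq : Ideal.map (Ideal.Quotient.mk (Brel k r α n)) (Jid k α n ε')
        = Ideal.map (Ideal.Quotient.mk (Brel k r α n)) (Jid k α n ε) := by
      rw [← span_Sset, ← span_Sset, Sset_congr k r α n hagree]
    rw [← hmapeq]
    exact hle'
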